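/- Let g > 0, G > 0, A_{aa} > 0, A_{ab} ∈ ℝ, A_cc > 0 and F^x_b, F^y_b ∈ ℝ be constants. Then the function (τ, F^x_a, F^y_a, U^x, U^y) ↦ ( (U^x)² + (U^y)² )/2 + g/(2τ) + (G/2)·( Σ_{i∈{x,y}} ( (F^i_a)² A_{aa} + 2 F^i_a F^i_b A_{ab} ) + A_cc/τ² ) is strictly convex on the open convex set { τ > 0 } × ℝ⁴. -/
import Mathlib

open Set

private lemma svm_prod_add {E F : Type*} [AddCommGroup E] [Module ℝ E]
    [AddCommGroup F] [Module ℝ F] {s : Set E} {t : Set F} {f : E → ℝ} {g : F → ℝ}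
    (hf : StrictConvexOn ℝ s f) (hg : StrictConvexOn ℝ t g) :
    StrictConvexOn ℝ (s ×ˢ t) (fun p => f p.1 + g p.2) := by
  refine ⟨hf.1.prod hg.1, ?_⟩
  rintro ⟨x1, x2⟩ ⟨hx1, hx2⟩ ⟨y1, y2⟩ ⟨hy1, hy2⟩ hne a b ha hb hab
  have key : x1 ≠ y1 ∨ x2 ≠ y2 := by
    by_contra h; push_neg at h; exact hne (Prod.ext h.1 h.2)
  simp only [Prod.smul_mk, Prod.mk_add_mk, smul_eq_mul]
  rcases key with h | h
  · have h1 := hf.2 hx1 hy1 h ha hb hab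
    have h2 := hg.convexOn.2 hx2 hy2 ha.le hb.le hab
    simp only [smul_eq_mul] at h1 h2
    linarith
  · have h1 := hf.convexOn.2 hx1 hy1 ha.le hb.le hab
    have h2 := hg.2 hx2 hy2 h ha hb hab
    simp only [smul_eq_mul] at h1 h2
    linarith

private lemma svm_smul {s : Set ℝ} {f : ℝ → ℝ} {c : ℝ} (hc : 0 < c)
    (hf : StrictConvexOn ℝ s f) : StrictConvexOn ℝ s fun x => c * f x := by
  refine ⟨hf.1, fun x hx y hy hxy a b ha hb hab => ?_⟩
  have h := hf.2 hx hy hxy ha hb hab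
  simp only [smul_eq_mul] at h ⊢
  nlinarith [mul_lt_mul_of_pos_left h hc]

private lemma svm_quad1d (c d : ℝ) (hc : 0 < c) :
    StrictConvexOn ℝ (univ : Set ℝ) (fun x : ℝ => c * x ^ 2 + d * x) := by
  refine ⟨convex_univ, ?_⟩
  intro x _ y _ hxy a b ha hb hab
  simp only [smul_eq_mul]
  have h0 : x - y ≠ 0 := sub_ne_zero.mpr hxy
  have hsq : 0 < (x - y) ^ 2 :=
    lt_of_le_of_ne (sq_nonneg _) (Ne.symm (pow_ne_zero 2 h0))
  have key : a * (c * x ^ 2 + d * x) + b * (c * y ^ 2 + d * y)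
      - (c * (a * x + b * y) ^ 2 + d * (a * x + b * y)) = c * a * b * (x - y) ^ 2 := by
    have hb' : b = 1 - a := by linarith
    rw [hb']; ring
  nlinarith [mul_pos (mul_pos ha hb) (mul_pos hc hsq)]

/-- the Lagrangian free energy is a strictly convex entropy.
For constants `g, G, A_aa, A_cc > 0` and `A_ab, F^x_b, F^y_b ∈ ℝ`, the function
`(τ, F^x_a, F^y_a, U^x, U^y) ↦ ((U^x)² + (U^y)²)/2 + g/(2τ)
  + (G/2)·( Σ_i ((F^i_a)²·A_aa + 2·F^i_a·F^i_b·A_ab) + A_cc/τ² )`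
is strictly convex on the open convex set `{τ > 0} × ℝ⁴`. -/
theorem svm_lagrangian_energy_strictConvex (g G Aaa Acc : ℝ) (Aab Fxb Fyb : ℝ)
    (hg : 0 < g) (hG : 0 < G) (hAaa : 0 < Aaa) (hAcc : 0 < Acc) :
    StrictConvexOn ℝ {p : ℝ × ℝ × ℝ × ℝ × ℝ | 0 < p.1}
      (fun p : ℝ × ℝ × ℝ × ℝ × ℝ =>
        ((p.2.2.2.1) ^ 2 + (p.2.2.2.2) ^ 2) / 2 + g / (2 * p.1)
          + (G / 2) * (((p.2.1) ^ 2 * Aaa + 2 * p.2.1 * Fxb * Aab)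
              + ((p.2.2.1) ^ 2 * Aaa + 2 * p.2.2.1 * Fyb * Aab)
              + Acc / p.1 ^ 2)) := by
  -- the 1-d pieces
  have hU : StrictConvexOn ℝ (univ : Set ℝ) (fun u : ℝ => (1/2 : ℝ) * u ^ 2 + 0 * u) :=
    svm_quad1d _ _ (by norm_num)
  have hFx : StrictConvexOn ℝ (univ : Set ℝ)
      (fun x : ℝ => (G / 2 * Aaa) * x ^ 2 + (G * Fxb * Aab) * x) :=
    svm_quad1d _ _ (by positivity)
  have hFy : StrictConvexOn ℝ (univ : Set ℝ)
      (fun x : ℝ => (G / 2 * Aaa) * x ^ 2 + (G * Fyb * Aab) * x) :=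
    svm_quad1d _ _ (by positivity)
  have hT : StrictConvexOn ℝ (Ioi (0 : ℝ))
      (fun t : ℝ => (g / 2) * t ^ (-1 : ℤ) + (G * Acc / 2) * t ^ (-2 : ℤ)) :=
    (svm_smul (by positivity) (strictConvexOn_zpow (by norm_num) (by norm_num))).add
      (svm_smul (by positivity) (strictConvexOn_zpow (by norm_num) (by norm_num)))
  have hQ := svm_prod_add hFx (svm_prod_add hFy (svm_prod_add hU hU))
  have htot := svm_prod_add hT hQ
  have hset : {p : ℝ × ℝ × ℝ × ℝ × ℝ | 0 < p.1}
      = (Ioi (0:ℝ)) ×ˢ ((univ : Set ℝ) ×ˢ ((univ : Set ℝ) ×ˢ ((univ : Set ℝ) ×ˢ (univ : Set ℝ)))) := by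
    ext ⟨t, x, y, u, v⟩
    simp [Set.mem_prod]
  have hfun : (fun p : ℝ × ℝ × ℝ × ℝ × ℝ =>
        ((p.2.2.2.1) ^ 2 + (p.2.2.2.2) ^ 2) / 2 + g / (2 * p.1)
          + (G / 2) * (((p.2.1) ^ 2 * Aaa + 2 * p.2.1 * Fxb * Aab)
              + ((p.2.2.1) ^ 2 * Aaa + 2 * p.2.2.1 * Fyb * Aab)
              + Acc / p.1 ^ 2))
      = fun p : ℝ × ℝ × ℝ × ℝ × ℝ =>
        ((g / 2) * p.1 ^ (-1 : ℤ) + (G * Acc / 2) * p.1 ^ (-2 : ℤ))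
          + (((G / 2 * Aaa) * p.2.1 ^ 2 + (G * Fxb * Aab) * p.2.1)
            + (((G / 2 * Aaa) * p.2.2.1 ^ 2 + (G * Fyb * Aab) * p.2.2.1)
              + (((1/2 : ℝ) * p.2.2.2.1 ^ 2 + 0 * p.2.2.2.1)
                + ((1/2 : ℝ) * p.2.2.2.2 ^ 2 + 0 * p.2.2.2.2)))) := by
    funext p
    simp only [smul_eq_mul, zpow_neg, zpow_one, zpow_two]
    ring
  rw [hset, hfun]
  exact htot
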